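/- Let A be a formula of L, x a variable, ȳ the list of free variables of A, and z̄ the list of free variables of ∀x A. If ∀ȳ A^t is provable in Q∘S4.t, then ∀z̄ (∀x A)^t is provable in Q∘S4.t. -/

import Mathlib

/-! ## Propositional intuitionistic formulas and IPC -/

inductive PropForm : Type
  | var : ℕ → PropForm
  | falsum : PropForm
  | and : PropForm → PropForm → PropForm
  | or : PropForm → PropForm → PropForm
  | impl : PropForm → PropForm → PropForm

/-- Hilbert-style intuitionistic propositional calculus. -/
inductive IPC : PropForm → Prop
  | ax1 (A B : PropForm) : IPC (A.impl (B.impl A))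
  | ax2 (A B C : PropForm) : IPC ((A.impl (B.impl C)).impl ((A.impl B).impl (A.impl C)))
  | andE1 (A B : PropForm) : IPC ((A.and B).impl A)
  | andE2 (A B : PropForm) : IPC ((A.and B).impl B)
  | andI (A B : PropForm) : IPC (A.impl (B.impl (A.and B)))
  | orI1 (A B : PropForm) : IPC (A.impl (A.or B))
  | orI2 (A B : PropForm) : IPC (B.impl (A.or B))
  | orE (A B C : PropForm) : IPC ((A.impl C).impl ((B.impl C).impl ((A.or B).impl C)))
  | exfalso (A : PropForm) : IPC (PropForm.falsum.impl A)
  | mp (A B : PropForm) : IPC (A.impl B) → IPC A → IPC B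

/-! ## Bimodal propositional formulas and S4.t -/

inductive BForm : Type
  | var : ℕ → BForm
  | falsum : BForm
  | impl : BForm → BForm → BForm
  | boxF : BForm → BForm
  | boxP : BForm → BForm

def BForm.neg (A : BForm) : BForm := A.impl .falsum
def BForm.diaF (A : BForm) : BForm := (A.neg.boxF).neg
def BForm.diaP (A : BForm) : BForm := (A.neg.boxP).neg

/-- The tense propositional logic S4.t: classical propositional logic, S4 axioms
for both `boxF` and `boxP`, the two tense axioms, MP and both necessitations. -/
inductive S4t : BForm → Prop
  | ax1 (A B : BForm) : S4t (A.impl (B.impl A))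
  | ax2 (A B C : BForm) : S4t ((A.impl (B.impl C)).impl ((A.impl B).impl (A.impl C)))
  | ax3 (A B : BForm) : S4t (((B.neg).impl (A.neg)).impl (A.impl B))
  | kF (A B : BForm) : S4t ((A.impl B).boxF.impl (A.boxF.impl B.boxF))
  | tF (A : BForm) : S4t (A.boxF.impl A)
  | fourF (A : BForm) : S4t (A.boxF.impl A.boxF.boxF)
  | kP (A B : BForm) : S4t ((A.impl B).boxP.impl (A.boxP.impl B.boxP))
  | tP (A : BForm) : S4t (A.boxP.impl A)
  | fourP (A : BForm) : S4t (A.boxP.impl A.boxP.boxP)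
  | tense1 (A : BForm) : S4t (A.impl A.diaF.boxP)
  | tense2 (A : BForm) : S4t (A.impl A.diaP.boxF)
  | mp (A B : BForm) : S4t (A.impl B) → S4t A → S4t B
  | necF (A : BForm) : S4t A → S4t A.boxF
  | necP (A : BForm) : S4t A → S4t A.boxP

/-! ## Predicate tense formulas (the language L_T) -/

/-- Formulas of the bimodal predicate language `L_T`.  The classical basis means
that `⊥, →, ∀, □F, □P` are primitive; the remaining connectives are the usual
classical abbreviations, defined below. -/
inductive TForm : Type
  | falsum : TForm
  | atom : ℕ → List ℕ → TForm
  | impl : TForm → TForm → TForm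
  | all : ℕ → TForm → TForm
  | boxF : TForm → TForm
  | boxP : TForm → TForm

def TForm.neg (A : TForm) : TForm := A.impl .falsum
def TForm.and (A B : TForm) : TForm := (A.impl B.neg).neg
def TForm.or (A B : TForm) : TForm := (A.neg).impl B
def TForm.iff (A B : TForm) : TForm := (A.impl B).and (B.impl A)
def TForm.ex (x : ℕ) (A : TForm) : TForm := (TForm.all x A.neg).neg
def TForm.diaF (A : TForm) : TForm := A.neg.boxF.neg
def TForm.diaP (A : TForm) : TForm := A.neg.boxP.neg

def TForm.freeVars : TForm → Finset ℕ
  | .falsum => ∅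
  | .atom _ args => args.toFinset
  | .impl A B => A.freeVars ∪ B.freeVars
  | .all x A => A.freeVars.erase x
  | .boxF A => A.freeVars
  | .boxP A => A.freeVars

/-- Replace every free occurrence of the variable `x` by `y`. -/
def TForm.subst (x y : ℕ) : TForm → TForm
  | .falsum => .falsum
  | .atom p args => .atom p (args.map fun v => if v = x then y else v)
  | .impl A B => .impl (A.subst x y) (B.subst x y)
  | .all z A => if z = x then .all z A else .all z (A.subst x y)
  | .boxF A => .boxF (A.subst x y)
  | .boxP A => .boxP (A.subst x y)

/-- `y` is substitutable for `x`: no free occurrence of `x` lies in the scope of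
a quantifier binding `y`. -/
def TForm.substOK (x y : ℕ) : TForm → Prop
  | .falsum => True
  | .atom _ _ => True
  | .impl A B => A.substOK x y ∧ B.substOK x y
  | .all z A => z = x ∨ ((z = y → x ∉ A.freeVars) ∧ A.substOK x y)
  | .boxF A => A.substOK x y
  | .boxP A => A.substOK x y

/-- Substitution of `L_T`-formulas for the propositional letters of a bimodal
propositional formula. -/
def BForm.tsubst (s : ℕ → TForm) : BForm → TForm
  | .var n => s n
  | .falsum => .falsum
  | .impl A B => .impl (A.tsubst s) (B.tsubst s)
  | .boxF A => .boxF (A.tsubst s)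
  | .boxP A => .boxP (A.tsubst s)

/-! ## The predicate tense logic Q∘S4.t -/

inductive QoS4t : TForm → Prop
  /-- all substitution instances of theorems of S4.t -/
  | s4t (φ : BForm) (s : ℕ → TForm) : S4t φ → QoS4t (φ.tsubst s)
  /-- (UI°)  ∀y(∀x A → A(y/x)) -/
  | ui (x y : ℕ) (A : TForm) (hok : A.substOK x y) :
      QoS4t (.all y ((TForm.all x A).impl (A.subst x y)))
  /-- ∀x(A → B) → (∀x A → ∀x B) -/
  | distrib (x : ℕ) (A B : TForm) :
      QoS4t ((TForm.all x (A.impl B)).impl ((TForm.all x A).impl (TForm.all x B)))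
  /-- ∀x∀y A ↔ ∀y∀x A -/
  | comm (x y : ℕ) (A : TForm) :
      QoS4t ((TForm.all x (TForm.all y A)).iff (TForm.all y (TForm.all x A)))
  /-- A → ∀x A, x not free in A -/
  | vac (x : ℕ) (A : TForm) (h : x ∉ A.freeVars) : QoS4t (A.impl (.all x A))
  /-- (NID)  ∀x A → A, x not free in A -/
  | nid (x : ℕ) (A : TForm) (h : x ∉ A.freeVars) : QoS4t ((TForm.all x A).impl A)
  /-- (CBF_F)  □F ∀x A → ∀x □F A -/
  | cbfF (x : ℕ) (A : TForm) : QoS4t ((TForm.all x A).boxF.impl (TForm.all x A.boxF))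
  | mp (A B : TForm) : QoS4t (A.impl B) → QoS4t A → QoS4t B
  | gen (x : ℕ) (A : TForm) : QoS4t A → QoS4t (.all x A)
  | necF (A : TForm) : QoS4t A → QoS4t A.boxF
  | necP (A : TForm) : QoS4t A → QoS4t A.boxP

/-! ## The language L of intuitionistic predicate logic and IQC -/

inductive IForm : Type
  | falsum : IForm
  | atom : ℕ → List ℕ → IForm
  | and : IForm → IForm → IForm
  | or : IForm → IForm → IForm
  | impl : IForm → IForm → IForm
  | all : ℕ → IForm → IForm
  | ex : ℕ → IForm → IForm

def IForm.freeVars : IForm → Finset ℕ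
  | .falsum => ∅
  | .atom _ args => args.toFinset
  | .and A B => A.freeVars ∪ B.freeVars
  | .or A B => A.freeVars ∪ B.freeVars
  | .impl A B => A.freeVars ∪ B.freeVars
  | .all x A => A.freeVars.erase x
  | .ex x A => A.freeVars.erase x

def IForm.subst (x y : ℕ) : IForm → IForm
  | .falsum => .falsum
  | .atom p args => .atom p (args.map fun v => if v = x then y else v)
  | .and A B => .and (A.subst x y) (B.subst x y)
  | .or A B => .or (A.subst x y) (B.subst x y)
  | .impl A B => .impl (A.subst x y) (B.subst x y)
  | .all z A => if z = x then .all z A else .all z (A.subst x y)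
  | .ex z A => if z = x then .ex z A else .ex z (A.subst x y)

def IForm.substOK (x y : ℕ) : IForm → Prop
  | .falsum => True
  | .atom _ _ => True
  | .and A B => A.substOK x y ∧ B.substOK x y
  | .or A B => A.substOK x y ∧ B.substOK x y
  | .impl A B => A.substOK x y ∧ B.substOK x y
  | .all z A => z = x ∨ ((z = y → x ∉ A.freeVars) ∧ A.substOK x y)
  | .ex z A => z = x ∨ ((z = y → x ∉ A.freeVars) ∧ A.substOK x y)

/-- Substitution of `L`-formulas for the propositional letters of an
intuitionistic propositional formula. -/
def PropForm.isubst (s : ℕ → IForm) : PropForm → IForm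
  | .var n => s n
  | .falsum => .falsum
  | .and A B => .and (A.isubst s) (B.isubst s)
  | .or A B => .or (A.isubst s) (B.isubst s)
  | .impl A B => .impl (A.isubst s) (B.isubst s)

/-- The intuitionistic predicate calculus IQC. -/
inductive IQC : IForm → Prop
  /-- all substitution instances of theorems of IPC -/
  | ipc (φ : PropForm) (s : ℕ → IForm) : IPC φ → IQC (φ.isubst s)
  /-- (UI)  ∀x A → A(y/x) -/
  | ui (x y : ℕ) (A : IForm) (hok : A.substOK x y) :
      IQC ((IForm.all x A).impl (A.subst x y))
  /-- A(y/x) → ∃x A -/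
  | exI (x y : ℕ) (A : IForm) (hok : A.substOK x y) :
      IQC ((A.subst x y).impl (IForm.ex x A))
  /-- ∀x(A → B) → (A → ∀x B), x not free in A -/
  | allImp (x : ℕ) (A B : IForm) (h : x ∉ A.freeVars) :
      IQC ((IForm.all x (A.impl B)).impl (A.impl (IForm.all x B)))
  /-- ∀x(A → B) → (∃x A → B), x not free in B -/
  | exImp (x : ℕ) (A B : IForm) (h : x ∉ B.freeVars) :
      IQC ((IForm.all x (A.impl B)).impl ((IForm.ex x A).impl B))
  | mp (A B : IForm) : IQC (A.impl B) → IQC A → IQC B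
  | gen (x : ℕ) (A : IForm) : IQC A → IQC (.all x A)

/-! ## The temporal Gödel translation -/

def IForm.t : IForm → TForm
  | .falsum => .falsum
  | .atom p args => .boxF (.atom p args)
  | .and A B => TForm.and A.t B.t
  | .or A B => TForm.or A.t B.t
  | .impl A B => .boxF (A.t.impl B.t)
  | .all x A => .boxF (.all x A.t)
  | .ex x A => TForm.diaP (TForm.ex x A.t)

/-- `closure [x₁,…,xₙ] A = ∀x₁ ⋯ ∀xₙ A`. -/
def TForm.closure (xs : List ℕ) (A : TForm) : TForm := xs.foldr TForm.all A

/-! ## Generalized Kripke semantics for Q∘S4.t -/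

/-- A Q∘S4.t-frame: a reflexive transitive relation on a nonempty set of worlds,
a nonempty constant outer domain `U`, and nonempty increasing inner domains. -/
structure TFrame where
  W : Type
  U : Type
  hW : Nonempty W
  hU : Nonempty U
  R : W → W → Prop
  refl : ∀ w, R w w
  trans : ∀ {u v w}, R u v → R v w → R u w
  D : W → Set U
  Dne : ∀ w, (D w).Nonempty
  Dmono : ∀ {w v}, R w v → D w ⊆ D v

/-- A model based on a Q∘S4.t-frame: interprets each predicate symbol at each
world as a relation on the outer domain. -/
structure TModel (F : TFrame) where
  I : F.W → ℕ → List F.U → Prop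

/-- Truth of an `L_T`-formula at a world under an assignment. -/
def TModel.truth {F : TFrame} (M : TModel F) : F.W → (ℕ → F.U) → TForm → Prop
  | _, _, .falsum => False
  | w, σ, .atom p args => M.I w p (args.map σ)
  | w, σ, .impl A B => M.truth w σ A → M.truth w σ B
  | w, σ, .all x A =>
      ∀ τ : ℕ → F.U, (∀ y, y ≠ x → τ y = σ y) → τ x ∈ F.D w → M.truth w τ A
  | w, σ, .boxF A => ∀ v, F.R w v → M.truth v σ A
  | w, σ, .boxP A => ∀ v, F.R v w → M.truth v σ A

/-- Validity of an `L_T`-formula in a Q∘S4.t-frame. -/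
def TFrame.valid (F : TFrame) (A : TForm) : Prop :=
  ∀ M : TModel F, ∀ w : F.W, ∀ σ : ℕ → F.U, M.truth w σ A

/-! ## Kripke semantics for IQC -/

/-- An IQC-frame: a partial order on a nonempty set of worlds with nonempty
increasing domains. -/
structure IFrame where
  W : Type
  α : Type
  hW : Nonempty W
  R : W → W → Prop
  refl : ∀ w, R w w
  trans : ∀ {u v w}, R u v → R v w → R u w
  antisymm : ∀ {u v}, R u v → R v u → u = v
  D : W → Set α
  Dne : ∀ w, (D w).Nonempty
  Dmono : ∀ {w v}, R w v → D w ⊆ D v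

/-- An IQC-model: `I w P ⊆ (D w)ⁿ`, increasing along `R`. -/
structure IModel (F : IFrame) where
  I : F.W → ℕ → List F.α → Prop
  Isub : ∀ w p as, I w p as → ∀ a ∈ as, a ∈ F.D w
  Imono : ∀ {w v} (p : ℕ) (as : List F.α), F.R w v → I w p as → I v p as

/-- Intuitionistic truth of an `L`-formula at a world under an assignment. -/
def IModel.truth {F : IFrame} (M : IModel F) : F.W → (ℕ → F.α) → IForm → Prop
  | _, _, .falsum => False
  | w, σ, .atom p args => M.I w p (args.map σ)
  | w, σ, .and A B => M.truth w σ A ∧ M.truth w σ B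
  | w, σ, .or A B => M.truth w σ A ∨ M.truth w σ B
  | w, σ, .impl A B => ∀ v, F.R w v → M.truth v σ A → M.truth v σ B
  | w, σ, .all x A =>
      ∀ v, F.R w v → ∀ τ : ℕ → F.α, (∀ y, y ≠ x → τ y = σ y) → τ x ∈ F.D v →
        M.truth v τ A
  | w, σ, .ex x A =>
      ∃ τ : ℕ → F.α, (∀ y, y ≠ x → τ y = σ y) ∧ τ x ∈ F.D w ∧ M.truth w τ A

/-! ## The associated Q∘S4.t-model M̄ -/

/-- The Q∘S4.t-frame associated to an IQC-frame: same worlds and relation,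
outer domain `U = ⋃ { D_w ∣ w ∈ W }`, same inner domains. -/
def IFrame.bar (F : IFrame) : TFrame where
  W := F.W
  U := {a : F.α // ∃ w, a ∈ F.D w}
  hW := F.hW
  hU := by
    obtain ⟨w⟩ := F.hW
    obtain ⟨a, ha⟩ := F.Dne w
    exact ⟨⟨a, w, ha⟩⟩
  R := F.R
  refl := F.refl
  trans := F.trans
  D := fun w => {a | a.1 ∈ F.D w}
  Dne := fun w => by
    obtain ⟨a, ha⟩ := F.Dne w
    exact ⟨⟨a, w, ha⟩, ha⟩
  Dmono := fun h _ ha => F.Dmono h ha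

/-- The Q∘S4.t-model `M̄` associated to an IQC-model `M`. -/
def IModel.bar {F : IFrame} (M : IModel F) : TModel F.bar where
  I := fun w p as => M.I w p (as.map Subtype.val)

/-! ### Auxiliary Hilbert-style derivations in S4.t -/

namespace S4tAux

open BForm

lemma imp_id (A : BForm) : S4t (A.impl A) :=
  S4t.mp _ _ (S4t.mp _ _ (S4t.ax2 A (A.impl A) A) (S4t.ax1 A (A.impl A))) (S4t.ax1 A A)

lemma syl (A B C : BForm) :
    S4t ((B.impl C).impl ((A.impl B).impl (A.impl C))) := by
  have h1 := S4t.ax2 A B C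
  have h3 : S4t ((B.impl C).impl ((A.impl (B.impl C)).impl ((A.impl B).impl (A.impl C)))) :=
    S4t.mp _ _ (S4t.ax1 _ (B.impl C)) h1
  have h5 := S4t.mp _ _ (S4t.ax2 (B.impl C) (A.impl (B.impl C)) ((A.impl B).impl (A.impl C))) h3
  exact S4t.mp _ _ h5 (S4t.ax1 (B.impl C) A)

lemma comp {A B C : BForm} (h1 : S4t (A.impl B)) (h2 : S4t (B.impl C)) : S4t (A.impl C) :=
  S4t.mp _ _ (S4t.mp _ _ (syl A B C) h2) h1

lemma imp_intro {A B : BForm} (h : S4t B) : S4t (A.impl B) :=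
  S4t.mp _ _ (S4t.ax1 B A) h

lemma swap {A B C : BForm} (h : S4t (A.impl (B.impl C))) : S4t (B.impl (A.impl C)) :=
  comp (S4t.ax1 B A) (S4t.mp _ _ (S4t.ax2 A B C) h)

lemma t3 (A B : BForm) : S4t (A.impl ((A.impl B).impl B)) :=
  swap (imp_id (A.impl B))

lemma efq (A : BForm) : S4t (BForm.falsum.impl A) :=
  S4t.mp _ _ (S4t.ax3 BForm.falsum A) (imp_intro (imp_id BForm.falsum))

lemma dni (A : BForm) : S4t (A.impl A.neg.neg) := t3 A BForm.falsum

lemma imp_bot (A B : BForm) : S4t (A.neg.impl (A.impl B)) :=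
  S4t.mp _ _ (syl A BForm.falsum B) (efq B)

lemma andE1 (A B : BForm) : S4t (((A.impl (B.impl .falsum)).impl .falsum).impl A) :=
  S4t.mp _ _ (S4t.ax3 ((A.impl B.neg).neg) A) (comp (imp_bot A B.neg) (dni (A.impl B.neg)))

end S4tAux

/-! ### Auxiliary derivations in Q∘S4.t -/

namespace QoAux

/-- Identity implication in `Q∘S4.t`. -/
lemma q_id (P : TForm) : QoS4t (P.impl P) :=
  QoS4t.s4t ((BForm.var 0).impl (BForm.var 0)) (fun _ => P) (S4tAux.imp_id (.var 0))

/-- Hypothetical syllogism as a derived rule. -/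
lemma q_syl {P Q R : TForm} (h1 : QoS4t (P.impl Q)) (h2 : QoS4t (Q.impl R)) :
    QoS4t (P.impl R) := by
  have t := QoS4t.s4t _ (fun n => if n = 0 then P else if n = 1 then Q else R)
    (S4tAux.syl (.var 0) (.var 1) (.var 2))
  simp only [BForm.tsubst] at t
  norm_num at t
  exact QoS4t.mp _ _ (QoS4t.mp _ _ t h2) h1

/-- Left conjunct of a provable conjunction. -/
lemma q_andE1 {X Y : TForm} (h : QoS4t (X.and Y)) : QoS4t X := by
  have t := QoS4t.s4t _ (fun n => if n = 0 then X else Y)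
    (S4tAux.andE1 (.var 0) (.var 1))
  simp only [BForm.tsubst] at t
  norm_num at t
  exact QoS4t.mp _ _ t h

/-- One direction of the quantifier commutation axiom. -/
lemma q_comm (x y : ℕ) (C : TForm) :
    QoS4t ((TForm.all x (TForm.all y C)).impl (TForm.all y (TForm.all x C))) :=
  q_andE1 (QoS4t.comm x y C)

/-- Monotonicity of `∀x` as a derived rule. -/
lemma q_mono_all (x : ℕ) {P Q : TForm} (h : QoS4t (P.impl Q)) :
    QoS4t ((TForm.all x P).impl (TForm.all x Q)) :=
  QoS4t.mp _ _ (QoS4t.distrib x P Q) (QoS4t.gen x _ h)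

/-- Monotonicity of closures. -/
lemma q_mono_closure (ws : List ℕ) {P Q : TForm} (h : QoS4t (P.impl Q)) :
    QoS4t ((TForm.closure ws P).impl (TForm.closure ws Q)) := by
  induction ws with
  | nil => exact h
  | cons w ws ih => exact q_mono_all w ih

/-- Pushing a universal quantifier inside a closure. -/
lemma q_push_all (x : ℕ) (ws : List ℕ) (P : TForm) :
    QoS4t ((TForm.all x (TForm.closure ws P)).impl (TForm.closure ws (TForm.all x P))) := by
  induction ws with
  | nil => exact q_id _
  | cons w ws ih =>
      exact q_syl (q_comm x w (TForm.closure ws P)) (q_mono_all w ih)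

/-- Pushing `□F` inside a closure, using (CBF_F). -/
lemma q_push_boxF (ws : List ℕ) (P : TForm) :
    QoS4t ((TForm.closure ws P).boxF.impl (TForm.closure ws P.boxF)) := by
  induction ws with
  | nil => exact q_id _
  | cons w ws ih =>
      exact q_syl (QoS4t.cbfF w (TForm.closure ws P)) (q_mono_all w ih)

/-- Closures over permuted variable lists are interderivable. -/
lemma q_perm {G : TForm} : ∀ {ys zs : List ℕ}, ys.Perm zs →
    QoS4t ((TForm.closure ys G).impl (TForm.closure zs G)) := by
  intro ys zs hp
  induction hp with
  | nil => exact q_id _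
  | cons a _ ih => exact q_mono_all a ih
  | swap a b l => exact q_comm b a (TForm.closure l G)
  | trans _ _ ih1 ih2 => exact q_syl ih1 ih2

end QoAux

/-- If `∀ȳ A^t` is provable in Q∘S4.t, where `ȳ` is the list of free variables
of `A` and `z̄` the list of free variables of `∀x A`, then `∀z̄ (∀x A)^t` is
provable in Q∘S4.t. -/
theorem closure_translation_gen (A : IForm) (x : ℕ) (ys zs : List ℕ)
    (hndy : ys.Nodup) (hfvy : ys.toFinset = A.freeVars)
    (hndz : zs.Nodup) (hfvz : zs.toFinset = (IForm.all x A).freeVars)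
    (h : QoS4t (TForm.closure ys A.t)) :
    QoS4t (TForm.closure zs (IForm.all x A).t) := by
  -- common part of the derivation: `⊢ ∀ȳ □F ∀x A^t`
  set G : TForm := .boxF (.all x A.t) with hG
  have h1 : QoS4t (TForm.all x (TForm.closure ys A.t)) := QoS4t.gen x _ h
  have h2 : QoS4t (TForm.closure ys (TForm.all x A.t)) :=
    QoS4t.mp _ _ (QoAux.q_push_all x ys A.t) h1
  have h3 : QoS4t (TForm.closure ys (TForm.all x A.t)).boxF := QoS4t.necF _ h2
  have h4 : QoS4t (TForm.closure ys G) :=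
    QoS4t.mp _ _ (QoAux.q_push_boxF ys (TForm.all x A.t)) h3
  have hGt : (IForm.all x A).t = G := rfl
  rw [hGt]
  have hfvz' : zs.toFinset = A.freeVars.erase x := hfvz
  by_cases hx : x ∈ A.freeVars
  · -- `ys` is a permutation of `zs ++ [x]`
    have hxz : x ∉ zs := by
      intro hmem
      have : x ∈ zs.toFinset := List.mem_toFinset.mpr hmem
      rw [hfvz'] at this
      exact (Finset.notMem_erase x _) this
    have hndzx : (zs ++ [x]).Nodup := by
      simp [List.nodup_append, hndz, hxz]
      exact fun a ha hax => hxz (hax ▸ ha)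
    have hfs : (zs ++ [x]).toFinset = ys.toFinset := by
      rw [List.toFinset_append, hfvy, hfvz']
      simp
      simpa using Finset.insert_erase hx
    have hperm : ys.Perm (zs ++ [x]) :=
      List.perm_of_nodup_nodup_toFinset_eq hndy hndzx hfs.symm
    have h5 : QoS4t (TForm.closure (zs ++ [x]) G) :=
      QoS4t.mp _ _ (QoAux.q_perm hperm) h4
    have h6 : TForm.closure (zs ++ [x]) G = TForm.closure zs (TForm.all x G) := by
      simp [TForm.closure, List.foldr_append]
    rw [h6] at h5
    have hxG : x ∉ G.freeVars := by
      simp [hG, TForm.freeVars]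
    exact QoS4t.mp _ _ (QoAux.q_mono_closure zs (QoS4t.nid x G hxG)) h5
  · -- `ys` is a permutation of `zs`
    have hfs : ys.toFinset = zs.toFinset := by
      rw [hfvy, hfvz', Finset.erase_eq_of_notMem hx]
    have hperm : ys.Perm zs :=
      List.perm_of_nodup_nodup_toFinset_eq hndy hndz hfs
    exact QoS4t.mp _ _ (QoAux.q_perm hperm) h4
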